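/- Let K be a field and n a positive integer. If A is a K-subalgebra of the matrix algebra M_n(K) with A ≠ M_n(K), then the codimension of A as a K-linear subspace of M_n(K) is at least n-1. -/

import Mathlib

open Module LinearMap

set_option synthInstance.maxHeartbeats 1000000
set_option maxHeartbeats 1000000

private lemma pi_semisimple {R M : Type*} [Ring R] [AddCommGroup M] [Module R M]
    [IsSemisimpleModule R M] {ι : Type*} [Finite ι] : IsSemisimpleModule R (ι → M) := by
  letI := Classical.decEq ι
  exact isSemisimpleModule_of_isSemisimpleModule_submodule'
    (p := fun i => range (single R (fun _ => M) i))
    (fun _ => IsSemisimpleModule.range _) (LinearMap.iSup_range_single R _)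

private lemma restrictScalars_isCompl {K R M : Type*} [Field K] [Ring R] [AddCommGroup M]
    [Module K M] [Module R M] [SMul K R] [IsScalarTower K R M] {p q : Submodule R M}
    (h : IsCompl p q) :
    IsCompl (p.restrictScalars K) (q.restrictScalars K) := by
  constructor
  · rw [disjoint_iff]
    have h1 := disjoint_iff.1 h.1
    ext x
    simp only [Submodule.mem_inf, Submodule.restrictScalars_mem, Submodule.mem_bot]
    constructor
    · rintro ⟨hp, hq⟩
      have : x ∈ p ⊓ q := ⟨hp, hq⟩
      rw [h1] at this; simpa using this
    · rintro rfl; simp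
  · rw [codisjoint_iff]
    have h2 := codisjoint_iff.1 h.2
    rw [eq_top_iff]
    intro x _
    have : x ∈ p ⊔ q := by rw [h2]; trivial
    obtain ⟨y, hy, z, hz, rfl⟩ := Submodule.mem_sup.1 this
    exact Submodule.mem_sup.2 ⟨y, hy, z, hz, rfl⟩

private theorem aux_codim (K : Type*) [Field K] (n : ℕ) (hn : 0 < n)
    (B : Subalgebra K (Module.End K (Fin n → K))) (hB : B ≠ ⊤) :
    Module.finrank K B + (n - 1) ≤ n ^ 2 := by
  classical
  have hnV : finrank K (Fin n → K) = n := by simp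
  have hnE : finrank K (Module.End K (Fin n → K)) = n ^ 2 := by
    have : finrank K ((Fin n → K) →ₗ[K] (Fin n → K)) = n * n := by
      rw [Module.finrank_linearMap, hnV]
    simpa [sq] using this
  haveI : Nontrivial (Fin n → K) := by
    have : Nonempty (Fin n) := ⟨⟨0, hn⟩⟩
    infer_instance
  by_cases hs : IsSimpleModule ↥B (Fin n → K)
  · -- simple case
    haveI := hs
    haveI hssV : IsSemisimpleModule ↥B (Fin n → K) := inferInstance
    haveI hssPi : IsSemisimpleModule ↥B (Fin n → (Fin n → K)) := pi_semisimple
    haveI hss : IsSemisimpleModule ↥B (Module.End K (Fin n → K)) :=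
      IsSemisimpleModule.congr ((Pi.basisFun K (Fin n)).constr ↥B).symm
    set N : Submodule ↥B (Module.End K (Fin n → K)) :=
      { carrier := B
        add_mem' := fun h1 h2 => B.add_mem h1 h2
        zero_mem' := B.zero_mem
        smul_mem' := fun c f hf => by
          have hcf : c • f = (c : Module.End K (Fin n → K)) * f := rfl
          rw [hcf]; exact B.mul_mem c.2 hf } with hN
    obtain ⟨C, hC⟩ := hss.1.exists_isCompl N
    have hCbot : C ≠ ⊥ := by
      rintro rfl
      apply hB
      have hNtop : N = ⊤ := by simpa using hC.sup_eq_top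
      ext f
      simp only [Algebra.mem_top, iff_true]
      have : f ∈ N := hNtop ▸ Submodule.mem_top
      exact this
    obtain ⟨f, hfC, hf0⟩ := Submodule.exists_mem_ne_zero_of_ne_bot hCbot
    have : ∃ v : Fin n → K, f v ≠ 0 := by
      by_contra h
      push_neg at h
      exact hf0 (LinearMap.ext fun v => by simpa using h v)
    obtain ⟨v, hfv⟩ := this
    set ev : Module.End K (Fin n → K) →ₗ[↥B] (Fin n → K) :=
      { toFun := fun g => g v
        map_add' := fun g h => rfl
        map_smul' := fun b g => rfl } with hev
    have hmap : C.map ev = ⊤ := by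
      rcases hs.1.2 (C.map ev) with h | h
      · exfalso
        apply hfv
        have : f v ∈ C.map ev := ⟨f, hfC, rfl⟩
        rw [h] at this
        simpa using this
      · exact h
    set evK : Module.End K (Fin n → K) →ₗ[K] (Fin n → K) :=
      { toFun := fun g => g v
        map_add' := fun g h => rfl
        map_smul' := fun c g => rfl } with hevK
    have hmapK : (C.restrictScalars K).map evK = ⊤ := by
      rw [eq_top_iff]
      intro x _
      have hx : x ∈ (⊤ : Submodule ↥B (Fin n → K)) := Submodule.mem_top
      rw [← hmap] at hx
      obtain ⟨g, hg, rfl⟩ := hx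
      exact ⟨g, hg, rfl⟩
    have hCn : n ≤ finrank K (C.restrictScalars K) := by
      have h1 := Submodule.finrank_map_le evK (C.restrictScalars K)
      rw [hmapK] at h1
      rwa [finrank_top, hnV] at h1
    have hcompl := restrictScalars_isCompl (K := K) (R := ↥B)
      (M := Module.End K (Fin n → K)) hC
    have hsum := Submodule.finrank_add_eq_of_isCompl hcompl
    have hNB : finrank K (N.restrictScalars K) = finrank K B := by
      have he : N.restrictScalars K = Subalgebra.toSubmodule B := by
        ext x; exact Iff.rfl
      rw [he]; rfl
    rw [hNB, hnE] at hsum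
    omega
  · -- non-simple case
    haveI : Nontrivial (Submodule ↥B (Fin n → K)) := by
      refine ⟨⊥, ⊤, fun h => ?_⟩
      obtain ⟨x, hx⟩ := exists_ne (0 : Fin n → K)
      have : x ∈ (⊥ : Submodule ↥B (Fin n → K)) := h ▸ Submodule.mem_top
      exact hx (by simpa using this)
    have hW : ∃ W : Submodule ↥B (Fin n → K), W ≠ ⊥ ∧ W ≠ ⊤ := by
      by_contra h
      push_neg at h
      exact hs (@IsSimpleModule.mk _ _ _ _ _ ⟨fun W => or_iff_not_imp_left.2 (h W)⟩)
    obtain ⟨W, hWbot, hWtop⟩ := hW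
    set W' : Submodule K (Fin n → K) := W.restrictScalars K with hW'
    have hd1 : 0 < finrank K W' := by
      rcases Nat.eq_zero_or_pos (finrank K W') with h | h
      · exfalso
        apply hWbot
        have hb : W' = ⊥ := Submodule.finrank_eq_zero.1 h
        rwa [hW', Submodule.restrictScalars_eq_bot_iff] at hb
      · exact h
    have hd2 : finrank K W' < n := by
      have hlt : W' < ⊤ := lt_top_iff_ne_top.2 (fun h => hWtop (by
        rwa [hW', Submodule.restrictScalars_eq_top_iff] at h))
      have hx := Submodule.finrank_lt hlt.ne
      rwa [hnV] at hx
    set Φ : Module.End K (Fin n → K) →ₗ[K] (↥W' →ₗ[K] (Fin n → K) ⧸ W') :=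
      { toFun := fun g => W'.mkQ ∘ₗ g ∘ₗ W'.subtype
        map_add' := fun g h => by ext w; simp
        map_smul' := fun c g => by ext w; simp } with hΦ
    have hker : Subalgebra.toSubmodule B ≤ ker Φ := by
      intro b hb
      rw [mem_ker]
      ext w
      simp only [hΦ, LinearMap.coe_mk, AddHom.coe_mk, coe_comp, Function.comp_apply,
        Submodule.coe_subtype, Submodule.mkQ_apply, LinearMap.zero_apply,
        Submodule.Quotient.mk_eq_zero]
      exact (W.smul_mem (⟨b, hb⟩ : ↥B) w.2 : _)
    have hsurj : range Φ = ⊤ := by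
      rw [range_eq_top]
      intro g
      obtain ⟨s, hsec⟩ := LinearMap.exists_rightInverse_of_surjective W'.mkQ W'.range_mkQ
      obtain ⟨π, hπ⟩ := LinearMap.exists_leftInverse_of_injective W'.subtype W'.ker_subtype
      refine ⟨(s ∘ₗ g) ∘ₗ π, ?_⟩
      ext w
      have h1 : π ((W'.subtype) w) = w := DFunLike.congr_fun hπ w
      have h2 : W'.mkQ (s (g w)) = g w := DFunLike.congr_fun hsec (g w)
      simp only [hΦ, LinearMap.coe_mk, AddHom.coe_mk, coe_comp, Function.comp_apply,
        Submodule.coe_subtype, Submodule.mkQ_apply]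
      rw [show π (w : Fin n → K) = w from h1]
      exact h2
    have hrank := LinearMap.finrank_range_add_finrank_ker Φ
    rw [hsurj, finrank_top, hnE] at hrank
    have hhom : finrank K (↥W' →ₗ[K] (Fin n → K) ⧸ W') = finrank K W' * (n - finrank K W') := by
      rw [Module.finrank_linearMap]
      congr 1
      have hq := Submodule.finrank_quotient_add_finrank W'
      rw [hnV] at hq
      omega
    have hBk : finrank K (Subalgebra.toSubmodule B) ≤ finrank K (ker Φ) :=
      Submodule.finrank_mono hker
    have harith : n - 1 ≤ finrank K W' * (n - finrank K W') := by
      obtain ⟨a, ha⟩ : ∃ a, finrank K W' = a + 1 := ⟨finrank K W' - 1, by omega⟩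
      obtain ⟨b, hb⟩ : ∃ b, n - finrank K W' = b + 1 := ⟨n - finrank K W' - 1, by omega⟩
      rw [ha] at hb ⊢
      rw [hb]
      have : (a + 1) * (b + 1) = a * b + a + b + 1 := by ring
      omega
    rw [hhom] at hrank
    have hBB : finrank K (Subalgebra.toSubmodule B) = finrank K B := rfl
    omega

theorem subalgebra_codim_ge (K : Type*) [Field K] (n : ℕ) (hn : 0 < n)
    (A : Subalgebra K (Matrix (Fin n) (Fin n) K)) (hA : A ≠ ⊤) :
    n - 1 ≤ n ^ 2 - Module.finrank K A := by
  classical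
  set e := Matrix.toLinAlgEquiv' (R := K) (n := Fin n) with he
  set B : Subalgebra K (Module.End K (Fin n → K)) := A.map e.toAlgHom with hB
  have hBtop : B ≠ ⊤ := by
    intro h
    apply hA
    have hmt : Subalgebra.map e.toAlgHom ⊤ = ⊤ := by
      ext x
      simp only [Algebra.mem_top, iff_true, Subalgebra.mem_map]
      exact ⟨e.symm x, trivial, by simp⟩
    apply Subalgebra.map_injective (f := e.toAlgHom) e.injective
    rw [hmt, ← hB, h]
  have hfr : finrank K A = finrank K B :=
    (Subalgebra.equivMapOfInjective A e.toAlgHom e.injective).toLinearEquiv.finrank_eq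
  have hle : finrank K A ≤ n ^ 2 := by
    have h1 : finrank K (Subalgebra.toSubmodule A) ≤ finrank K (Matrix (Fin n) (Fin n) K) :=
      Submodule.finrank_le _
    have h2 : finrank K (Matrix (Fin n) (Fin n) K) = n ^ 2 := by
      rw [Module.finrank_matrix]; simp [sq]
    rw [h2] at h1
    exact h1
  have key := aux_codim K n hn B hBtop
  omega
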